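/- Suppose the martingale (W_n)_{n≥0} is uniformly integrable. Let M_∞ := sup_{n≥0} W_n. Then E[M_∞] < ∞. -/

import Mathlib

open MeasureTheory ProbabilityTheory Filter Topology

noncomputable section

namespace DirectedPolymer

variable {Ω : Type*} [MeasurableSpace Ω]

/-- The nearest-neighbor step in `ℤ^d` in direction `e.1`, forward if `e.2 = true`,
backward otherwise. -/
def step (d : ℕ) (e : Fin d × Bool) : Fin d → ℤ :=
  Pi.single e.1 (if e.2 then 1 else -1)

/-- The position, after `k` steps, of the nearest-neighbor path started at the origin whose
successive steps are encoded by `σ`. -/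
def walkPos {d n : ℕ} (σ : Fin n → Fin d × Bool) (k : ℕ) : Fin d → ℤ :=
  ∑ j : Fin n, if (j : ℕ) < k then step d (σ j) else 0

/-- The logarithmic moment generating function `λ(β) = log E[exp (β ω(1,0))]`. -/
def logMGF {d : ℕ} (P : Measure Ω) (env : ℕ × (Fin d → ℤ) → Ω → ℝ) (β : ℝ) : ℝ :=
  Real.log (∫ x, Real.exp (β * env (1, 0) x) ∂P)

/-- The renormalized partition function `W_n` of the directed polymer: the expectation, over the
simple random walk `(S_i)` on `ℤ^d` started at the origin (uniform choice among the `2d`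
neighbors at each step), of `exp (β ∑_{i=1}^n ω(i, S_i) - n λ(β))`. -/
def W {d : ℕ} (P : Measure Ω) (env : ℕ × (Fin d → ℤ) → Ω → ℝ) (β : ℝ) (n : ℕ) (x : Ω) : ℝ :=
  (2 * d : ℝ)⁻¹ ^ n * ∑ σ : Fin n → Fin d × Bool,
    Real.exp (β * ∑ i : Fin n, env ((i : ℕ) + 1, walkPos σ ((i : ℕ) + 1)) x
      - n * logMGF P env β)

/-- The environment `ω = env` is a family of i.i.d. random variables, indexed by space-time
`ℕ × ℤ^d`, having all exponential moments: `E[exp (b |ω(1,0)|)] < ∞` for all `b ≥ 0`. -/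
structure IsIIDEnv {d : ℕ} (P : Measure Ω) (env : ℕ × (Fin d → ℤ) → Ω → ℝ) : Prop where
  meas : ∀ p, Measurable (env p)
  indep : iIndepFun env P
  ident : ∀ p, IdentDistrib (env p) (env (1, 0)) P P
  expMom : ∀ b : ℝ, 0 ≤ b → Integrable (fun x => Real.exp (b * |env (1, 0) x|)) P

/-- The filtration `F_n = σ(ω(i,x) : i ≤ n, x ∈ ℤ^d)` generated by the environment. -/
def envFiltration {d : ℕ} (env : ℕ × (Fin d → ℤ) → Ω → ℝ)
    (hmeas : ∀ p, Measurable (env p)) :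
    Filtration ℕ (inferInstance : MeasurableSpace Ω) where
  seq n := ⨆ p ∈ {p : ℕ × (Fin d → ℤ) | p.1 ≤ n}, MeasurableSpace.comap (env p) inferInstance
  mono' := by
    intro i j hij
    exact iSup₂_le fun p hp => le_iSup₂_of_le p (le_trans hp hij) le_rfl
  le' n := iSup₂_le fun p _ => (hmeas p).comap_le


/-- The polymer measure of the event `{S_n = y}`, multiplied by `W_n`:
`W_n · μ_{n,β}(S_n = y)`. -/
def polymerMass {d : ℕ} (P : Measure Ω) (env : ℕ × (Fin d → ℤ) → Ω → ℝ) (β : ℝ) (n : ℕ)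
    (y : Fin d → ℤ) (x : Ω) : ℝ :=
  (2 * d : ℝ)⁻¹ ^ n * ∑ σ : Fin n → Fin d × Bool,
    if walkPos σ n = y then
      Real.exp (β * ∑ i : Fin n, env ((i : ℕ) + 1, walkPos σ ((i : ℕ) + 1)) x
        - n * logMGF P env β)
    else 0

/-- The space-time shift `θ_{n,y}` of the environment: `(θ_{n,y} ω)(·,·) = ω(n + ·, y + ·)`. -/
def shiftEnv {d : ℕ} (n : ℕ) (y : Fin d → ℤ) (env : ℕ × (Fin d → ℤ) → Ω → ℝ) :
    ℕ × (Fin d → ℤ) → Ω → ℝ :=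
  fun p => env (n + p.1, y + p.2)

/-- The hitting time `inf {n ≥ 0 : t < g n x}` of `(t, ∞)`, with value `⊤ = ∞` if the
process never exceeds `t`. -/
def hitAbove (g : ℕ → Ω → ℝ) (t : ℝ) (x : Ω) : ℕ∞ :=
  sInf {m : ℕ∞ | ∃ k : ℕ, m = (k : ℕ∞) ∧ t < g k x}

/-- The hitting time `inf {n ≥ 0 : g n x ≤ s}` of `(-∞, s]`, with value `⊤ = ∞` if the
process never goes below `s`. -/
def hitBelow (g : ℕ → Ω → ℝ) (s : ℝ) (x : Ω) : ℕ∞ :=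
  sInf {m : ℕ∞ | ∃ k : ℕ, m = (k : ℕ∞) ∧ g k x ≤ s}

variable (P : Measure Ω) [IsProbabilityMeasure P]

set_option linter.unusedSectionVars false

section Aux
lemma abs_step_le {d : ℕ} (e : Fin d × Bool) (i : Fin d) : |step d e i| ≤ 1 := by
  unfold step
  rw [Pi.single_apply]
  split_ifs <;> simp

lemma walkPos_eq_sum_range {d n : ℕ} (σ : Fin n → Fin d × Bool) {c : ℕ} (hc : c ≤ n) :
    walkPos σ c = ∑ j : Fin c, step d (σ (Fin.castLE hc j)) := by
  unfold walkPos
  rw [← Finset.sum_filter]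
  have hset : Finset.univ.filter (fun j : Fin n => (j : ℕ) < c)
      = Finset.univ.map (Fin.castLEEmb hc) := by
    ext j
    simp only [Finset.mem_filter, Finset.mem_univ, true_and, Finset.mem_map]
    constructor
    · intro h; exact ⟨⟨(j : ℕ), h⟩, Fin.ext rfl⟩
    · rintro ⟨a, -, rfl⟩; simpa using a.isLt
  rw [hset, Finset.sum_map]
  rfl

lemma abs_walkPos_le {d n : ℕ} (σ : Fin n → Fin d × Bool) (c : ℕ) (i : Fin d) :
    |walkPos σ c i| ≤ (c : ℤ) := by
  have h1 : walkPos σ c i = ∑ j : Fin n, (if (j : ℕ) < c then step d (σ j) i else 0) := by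
    unfold walkPos
    rw [Finset.sum_apply]
    exact Finset.sum_congr rfl fun j _ => by rw [apply_ite (fun f : Fin d → ℤ => f i)]; rfl
  rw [h1]
  refine le_trans (Finset.abs_sum_le_sum_abs _ _) ?_
  have h2 : ∀ j : Fin n, |if (j : ℕ) < c then step d (σ j) i else 0| ≤
      (if (j : ℕ) < c then (1 : ℤ) else 0) := by
    intro j; split_ifs
    · exact abs_step_le _ _
    · simp
  refine le_trans (Finset.sum_le_sum fun j _ => h2 j) ?_
  rw [← Finset.sum_filter]
  simp only [Finset.sum_const, nsmul_eq_mul, mul_one]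
  have : (Finset.univ.filter fun j : Fin n => (j : ℕ) < c).card ≤ c := by
    have := Finset.card_le_card_of_injOn
      (s := Finset.univ.filter fun j : Fin n => (j : ℕ) < c) (t := Finset.range c)
      (fun j : Fin n => (j : ℕ))
      (fun j hj => Finset.mem_range.mpr (Finset.mem_filter.mp hj).2)
      (fun a _ b _ h => Fin.ext h)
    simpa using this
  exact_mod_cast this

def catPath {d k m : ℕ} (τ : Fin k → Fin d × Bool) (ρ : Fin m → Fin d × Bool) :
    Fin (k + m) → Fin d × Bool :=
  fun j => if h : (j : ℕ) < k then τ ⟨j, h⟩ else ρ ⟨(j : ℕ) - k, by have := j.isLt; omega⟩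

lemma catPath_castAdd {d k m : ℕ} (τ : Fin k → Fin d × Bool) (ρ : Fin m → Fin d × Bool)
    (i : Fin k) : catPath τ ρ (Fin.castAdd m i) = τ i := by
  unfold catPath
  rw [dif_pos (by simpa using i.isLt)]
  exact congrArg τ (Fin.ext rfl)

lemma catPath_natAdd {d k m : ℕ} (τ : Fin k → Fin d × Bool) (ρ : Fin m → Fin d × Bool)
    (i : Fin m) : catPath τ ρ (Fin.natAdd k i) = ρ i := by
  unfold catPath
  rw [dif_neg (by simp)]
  exact congrArg ρ (Fin.ext (by simp))

lemma catPath_bijective {d k m : ℕ} :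
    Function.Bijective (fun p : (Fin k → Fin d × Bool) × (Fin m → Fin d × Bool) =>
      catPath p.1 p.2) := by
  apply Function.bijective_iff_has_inverse.mpr
  refine ⟨fun σ => (fun i => σ (Fin.castAdd m i), fun i => σ (Fin.natAdd k i)), ?_, ?_⟩
  · intro p
    dsimp only
    exact Prod.ext (funext fun i => catPath_castAdd _ _ i) (funext fun i => catPath_natAdd _ _ i)
  · intro σ
    funext j
    dsimp only
    by_cases h : (j : ℕ) < k
    · rw [show j = Fin.castAdd m ⟨(j : ℕ), h⟩ from Fin.ext rfl]
      exact catPath_castAdd _ _ _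
    · have hj := j.isLt
      rw [show j = Fin.natAdd k ⟨(j : ℕ) - k, by omega⟩ from Fin.ext (by simp; omega)]
      exact catPath_natAdd _ _ _

lemma sum_eq_sum_catPath {d k m : ℕ} {M : Type*} [AddCommMonoid M]
    (F : (Fin (k + m) → Fin d × Bool) → M) :
    ∑ σ : Fin (k + m) → Fin d × Bool, F σ =
      ∑ τ : Fin k → Fin d × Bool, ∑ ρ : Fin m → Fin d × Bool, F (catPath τ ρ) := by
  have h := Fintype.sum_bijective _ (catPath_bijective (d := d) (k := k) (m := m))
    (fun p => F (catPath p.1 p.2)) F (fun p => rfl)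
  rw [← h, Fintype.sum_prod_type]

lemma walkPos_catPath_left {d k m : ℕ} (τ : Fin k → Fin d × Bool) (ρ : Fin m → Fin d × Bool)
    {c : ℕ} (hc : c ≤ k) :
    walkPos (catPath τ ρ) c = walkPos τ c := by
  rw [walkPos_eq_sum_range _ (hc.trans (Nat.le_add_right k m)), walkPos_eq_sum_range _ hc]
  refine Finset.sum_congr rfl fun j _ => ?_
  refine congrArg (step d) ?_
  unfold catPath
  rw [dif_pos (show ((Fin.castLE (hc.trans (Nat.le_add_right k m)) j : Fin (k+m)) : ℕ) < k
    from lt_of_lt_of_le j.isLt hc)]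
  exact congrArg τ (Fin.ext rfl)

lemma walkPos_catPath_add {d k m : ℕ} (τ : Fin k → Fin d × Bool) (ρ : Fin m → Fin d × Bool)
    {c : ℕ} (hc : c ≤ m) :
    walkPos (catPath τ ρ) (k + c) = walkPos τ k + walkPos ρ c := by
  rw [walkPos_eq_sum_range _ (by omega : k + c ≤ k + m)]
  rw [show (∑ j : Fin (k + c), step d (catPath τ ρ (Fin.castLE (by omega) j))) =
    ∑ j : Fin (k + c), (fun j' : Fin (k+c) =>
      step d (catPath τ ρ (Fin.castLE (by omega : k+c ≤ k+m) j'))) j from rfl]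
  rw [Fin.sum_univ_add]
  congr 1
  · rw [walkPos_eq_sum_range _ (le_refl k)]
    refine Finset.sum_congr rfl fun j _ => ?_
    refine congrArg (step d) ?_
    unfold catPath
    rw [dif_pos (by simpa using j.isLt)]
    exact congrArg τ (Fin.ext rfl)
  · rw [walkPos_eq_sum_range _ hc]
    refine Finset.sum_congr rfl fun j _ => ?_
    refine congrArg (step d) ?_
    unfold catPath
    rw [dif_neg (by simp)]
    exact congrArg ρ (Fin.ext (by simp))


-- ===== stage 2 =====

/-- Abstract version of `W` as a function of the realized field. -/
def WF (d : ℕ) (β lam : ℝ) (m : ℕ) (f : ℕ × (Fin d → ℤ) → ℝ) : ℝ :=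
  (2 * d : ℝ)⁻¹ ^ m * ∑ σ : Fin m → Fin d × Bool,
    Real.exp (β * ∑ i : Fin m, f ((i : ℕ) + 1, walkPos σ ((i : ℕ) + 1)) - m * lam)

/-- Abstract weight of an initial path segment. -/
def wgtF (d : ℕ) (β lam : ℝ) (k : ℕ) (τ : Fin k → Fin d × Bool)
    (f : ℕ × (Fin d → ℤ) → ℝ) : ℝ :=
  (2 * d : ℝ)⁻¹ ^ k *
    Real.exp (β * ∑ i : Fin k, f ((i : ℕ) + 1, walkPos τ ((i : ℕ) + 1)) - k * lam)

variable {d : ℕ} {β lam : ℝ}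

lemma W_eq_WF (P : Measure Ω) (env : ℕ × (Fin d → ℤ) → Ω → ℝ) (m : ℕ) (x : Ω) :
    W P env β m x = WF d β (logMGF P env β) m (fun p => env p x) := rfl

lemma measurable_WF (m : ℕ) : Measurable (WF d β lam m) := by
  apply Measurable.const_mul
  apply Finset.measurable_sum
  intro σ _
  apply Real.measurable_exp.comp
  apply Measurable.sub _ measurable_const
  apply Measurable.const_mul
  apply Finset.measurable_sum
  intro i _
  exact measurable_pi_apply _

lemma measurable_wgtF (k : ℕ) (τ : Fin k → Fin d × Bool) : Measurable (wgtF d β lam k τ) := by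
  apply Measurable.const_mul
  apply Real.measurable_exp.comp
  apply Measurable.sub _ measurable_const
  apply Measurable.const_mul
  apply Finset.measurable_sum
  intro i _
  exact measurable_pi_apply _

lemma WF_congr {m : ℕ} {f g : ℕ × (Fin d → ℤ) → ℝ}
    (h : ∀ (σ : Fin m → Fin d × Bool) (i : Fin m),
      f ((i : ℕ) + 1, walkPos σ ((i : ℕ) + 1)) = g ((i : ℕ) + 1, walkPos σ ((i : ℕ) + 1))) :
    WF d β lam m f = WF d β lam m g := by
  unfold WF
  congr 1
  refine Finset.sum_congr rfl fun σ _ => ?_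
  have hs : (∑ i : Fin m, f ((i : ℕ) + 1, walkPos σ ((i : ℕ) + 1)))
      = ∑ i : Fin m, g ((i : ℕ) + 1, walkPos σ ((i : ℕ) + 1)) :=
    Finset.sum_congr rfl fun i _ => h σ i
  rw [hs]

lemma wgtF_congr {k : ℕ} {τ : Fin k → Fin d × Bool} {f g : ℕ × (Fin d → ℤ) → ℝ}
    (h : ∀ i : Fin k,
      f ((i : ℕ) + 1, walkPos τ ((i : ℕ) + 1)) = g ((i : ℕ) + 1, walkPos τ ((i : ℕ) + 1))) :
    wgtF d β lam k τ f = wgtF d β lam k τ g := by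
  unfold wgtF
  have hs : (∑ i : Fin k, f ((i : ℕ) + 1, walkPos τ ((i : ℕ) + 1)))
      = ∑ i : Fin k, g ((i : ℕ) + 1, walkPos τ ((i : ℕ) + 1)) :=
    Finset.sum_congr rfl fun i _ => h i
  rw [hs]

lemma wgtF_nonneg {k : ℕ} (τ : Fin k → Fin d × Bool) (f : ℕ × (Fin d → ℤ) → ℝ) :
    0 ≤ wgtF d β lam k τ f :=
  mul_nonneg (pow_nonneg (inv_nonneg.mpr (by positivity)) k) (Real.exp_nonneg _)

lemma sum_wgtF {k : ℕ} (f : ℕ × (Fin d → ℤ) → ℝ) :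
    ∑ τ : Fin k → Fin d × Bool, wgtF d β lam k τ f = WF d β lam k f := by
  unfold wgtF WF
  rw [Finset.mul_sum]

lemma WF_nonneg (m : ℕ) (f : ℕ × (Fin d → ℤ) → ℝ) : 0 ≤ WF d β lam m f := by
  rw [← sum_wgtF]
  exact Finset.sum_nonneg fun τ _ => wgtF_nonneg τ f

lemma WF_pos (hd : 0 < d) (m : ℕ) (f : ℕ × (Fin d → ℤ) → ℝ) : 0 < WF d β lam m f := by
  have : Nonempty (Fin d) := ⟨⟨0, hd⟩⟩
  apply mul_pos
  · apply pow_pos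
    rw [inv_pos]
    positivity
  · apply Finset.sum_pos (fun σ _ => Real.exp_pos _)
    exact Finset.univ_nonempty

lemma WF_zero (f : ℕ × (Fin d → ℤ) → ℝ) : WF d β lam 0 f = 1 := by
  simp [WF]

lemma wgtF_le_WF {k : ℕ} (τ : Fin k → Fin d × Bool) (f : ℕ × (Fin d → ℤ) → ℝ) :
    wgtF d β lam k τ f ≤ WF d β lam k f := by
  rw [← sum_wgtF]
  exact Finset.single_le_sum (fun τ' _ => wgtF_nonneg τ' f) (Finset.mem_univ τ)

/-- The Markov decomposition of `WF (k+m)` at time `k`. -/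
lemma WF_decomp (k m : ℕ) (f : ℕ × (Fin d → ℤ) → ℝ) :
    WF d β lam (k + m) f = ∑ τ : Fin k → Fin d × Bool, wgtF d β lam k τ f *
      WF d β lam m (fun p => f (k + p.1, walkPos τ k + p.2)) := by
  have hterm : ∀ (τ : Fin k → Fin d × Bool) (ρ : Fin m → Fin d × Bool),
      Real.exp (β * ∑ i : Fin (k + m),
          f ((i : ℕ) + 1, walkPos (catPath τ ρ) ((i : ℕ) + 1)) - (↑(k + m)) * lam)
      = Real.exp (β * ∑ i : Fin k, f ((i : ℕ) + 1, walkPos τ ((i : ℕ) + 1)) - k * lam)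
        * Real.exp (β * ∑ i : Fin m,
            f (k + ((i : ℕ) + 1), walkPos τ k + walkPos ρ ((i : ℕ) + 1)) - m * lam) := by
    intro τ ρ
    rw [← Real.exp_add]
    congr 1
    have hsplit : ∑ i : Fin (k + m), f ((i : ℕ) + 1, walkPos (catPath τ ρ) ((i : ℕ) + 1))
        = (∑ i : Fin k, f ((i : ℕ) + 1, walkPos τ ((i : ℕ) + 1)))
          + ∑ i : Fin m, f (k + ((i : ℕ) + 1), walkPos τ k + walkPos ρ ((i : ℕ) + 1)) := by
      rw [Fin.sum_univ_add]
      congr 1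
      · refine Finset.sum_congr rfl fun i _ => ?_
        have h1 : ((Fin.castAdd m i : Fin (k + m)) : ℕ) = (i : ℕ) := rfl
        rw [h1, walkPos_catPath_left τ ρ (by omega : (i : ℕ) + 1 ≤ k)]
      · refine Finset.sum_congr rfl fun i _ => ?_
        have h1 : ((Fin.natAdd k i : Fin (k + m)) : ℕ) = k + (i : ℕ) := rfl
        rw [h1, show k + (i : ℕ) + 1 = k + ((i : ℕ) + 1) by omega,
          walkPos_catPath_add τ ρ (by omega : (i : ℕ) + 1 ≤ m)]
    rw [hsplit]
    push_cast
    ring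
  unfold WF wgtF
  rw [sum_eq_sum_catPath (fun σ => Real.exp (β * ∑ i : Fin (k + m),
      f ((i : ℕ) + 1, walkPos σ ((i : ℕ) + 1)) - (↑(k + m)) * lam))]
  rw [Finset.mul_sum]
  refine Finset.sum_congr rfl fun τ _ => ?_
  rw [show ∑ ρ : Fin m → Fin d × Bool, Real.exp (β * ∑ i : Fin (k + m),
      f ((i : ℕ) + 1, walkPos (catPath τ ρ) ((i : ℕ) + 1)) - (↑(k + m)) * lam)
    = ∑ ρ : Fin m → Fin d × Bool,
        Real.exp (β * ∑ i : Fin k, f ((i : ℕ) + 1, walkPos τ ((i : ℕ) + 1)) - k * lam)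
        * Real.exp (β * ∑ i : Fin m,
            f (k + ((i : ℕ) + 1), walkPos τ k + walkPos ρ ((i : ℕ) + 1)) - m * lam)
    from Finset.sum_congr rfl fun ρ _ => hterm τ ρ]
  rw [← Finset.mul_sum, pow_add]
  ring

variable (P : Measure Ω) [IsProbabilityMeasure P] {env : ℕ × (Fin d → ℤ) → Ω → ℝ}

lemma logMGF_shift (henv : IsIIDEnv P env) (k : ℕ) (y : Fin d → ℤ) :
    logMGF P (shiftEnv k y env) β = logMGF P env β := by
  unfold logMGF
  congr 1
  exact ((henv.ident (k + 1, y + 0)).comp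
    (Real.measurable_exp.comp (measurable_id.const_mul β))).integral_eq

lemma W_shift_eq (henv : IsIIDEnv P env) (k m : ℕ) (y : Fin d → ℤ) (x : Ω) :
    W P (shiftEnv k y env) β m x
      = WF d β (logMGF P env β) m (fun p => env (k + p.1, y + p.2) x) := by
  rw [W_eq_WF, logMGF_shift P henv]
  rfl

lemma W_decomp (henv : IsIIDEnv P env) (k m : ℕ) (x : Ω) :
    W P env β (k + m) x = ∑ τ : Fin k → Fin d × Bool,
      wgtF d β (logMGF P env β) k τ (fun p => env p x)
        * W P (shiftEnv k (walkPos τ k) env) β m x := by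
  rw [W_eq_WF, WF_decomp]
  refine Finset.sum_congr rfl fun τ _ => ?_
  rw [W_shift_eq P henv]

lemma measurable_W (henv : IsIIDEnv P env) (m : ℕ) : Measurable (W P env β m) := by
  have : W P env β m = (WF d β (logMGF P env β) m) ∘ (fun x p => env p x) := rfl
  rw [this]
  exact (measurable_WF m).comp (measurable_pi_lambda _ fun p => henv.meas p)

lemma measurable_W_shift (henv : IsIIDEnv P env) (k m : ℕ) (y : Fin d → ℤ) :
    Measurable (W P (shiftEnv k y env) β m) := by
  have : W P (shiftEnv k y env) β m
      = (WF d β (logMGF P env β) m) ∘ (fun x p => env (k + p.1, y + p.2) x) := by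
    funext x; exact W_shift_eq P henv k m y x
  rw [this]
  exact (measurable_WF m).comp (measurable_pi_lambda _ fun p => henv.meas _)


-- integrability of a single exponential
lemma integrable_exp_abs (henv : IsIIDEnv P env) (hβ : 0 ≤ β) (p : ℕ × (Fin d → ℤ)) :
    Integrable (fun x => Real.exp (β * |env p x|)) P := by
  have h := (henv.ident p).comp
    (u := fun r : ℝ => Real.exp (β * |r|))
    (Real.measurable_exp.comp ((measurable_abs).const_mul β))
  exact h.integrable_iff.mpr (henv.expMom β hβ)

lemma integrable_exp (henv : IsIIDEnv P env) (hβ : 0 ≤ β) (p : ℕ × (Fin d → ℤ)) :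
    Integrable (fun x => Real.exp (β * env p x)) P := by
  refine (integrable_exp_abs P henv hβ p).mono'
    ((Real.measurable_exp.comp ((henv.meas p).const_mul β)).aestronglyMeasurable) ?_
  filter_upwards with x
  rw [Real.norm_eq_abs, abs_of_nonneg (Real.exp_nonneg _)]
  exact Real.exp_le_exp.mpr (mul_le_mul_of_nonneg_left (le_abs_self _) hβ)

-- the two iid exponential families
lemma iIndepFun_exp (henv : IsIIDEnv P env) :
    iIndepFun (fun p => fun x => Real.exp (β * env p x)) P :=
  henv.indep.comp (fun _ r => Real.exp (β * r))
    (fun _ => Real.measurable_exp.comp (measurable_id.const_mul β))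

lemma iIndepFun_exp_abs (henv : IsIIDEnv P env) :
    iIndepFun (fun p => fun x => Real.exp (β * |env p x|)) P :=
  henv.indep.comp (fun _ r => Real.exp (β * |r|))
    (fun _ => Real.measurable_exp.comp (measurable_abs.const_mul β))

lemma prod_fun_eq (s : Finset (ℕ × (Fin d → ℤ))) (F : (ℕ × (Fin d → ℤ)) → Ω → ℝ) :
    (∏ j ∈ s, F j) = fun x => ∏ p ∈ s, F p x := by
  funext x; rw [Finset.prod_apply]

lemma integrable_prod_exp_abs (henv : IsIIDEnv P env) (hβ : 0 ≤ β)
    (s : Finset (ℕ × (Fin d → ℤ))) :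
    Integrable (fun x => ∏ p ∈ s, Real.exp (β * |env p x|)) P := by
  classical
  induction s using Finset.induction_on with
  | empty => simpa using (integrable_const (1 : ℝ))
  | insert a s ha ih =>
    have hindep := (iIndepFun_exp_abs P henv (β := β)).indepFun_finsetProd_of_notMem
      (fun p => Real.measurable_exp.comp ((henv.meas p).abs.const_mul β)) ha
    rw [prod_fun_eq] at hindep
    have := hindep.integrable_mul ih (integrable_exp_abs P henv hβ a)
    have heq : (fun x => ∏ p ∈ insert a s, Real.exp (β * |env p x|))
        = (fun x => ∏ p ∈ s, Real.exp (β * |env p x|)) * (fun x => Real.exp (β * |env a x|)) := by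
      funext x
      simp only [Pi.mul_apply]
      rw [Finset.prod_insert ha, mul_comm]
    rw [heq]
    exact this

lemma integral_prod_exp (henv : IsIIDEnv P env) (s : Finset (ℕ × (Fin d → ℤ))) :
    ∫ x, ∏ p ∈ s, Real.exp (β * env p x) ∂P
      = ∏ p ∈ s, ∫ x, Real.exp (β * env p x) ∂P := by
  classical
  induction s using Finset.induction_on with
  | empty => simp
  | insert a s ha ih =>
    have hmeas : ∀ p : ℕ × (Fin d → ℤ), Measurable fun x => Real.exp (β * env p x) :=
      fun p => Real.measurable_exp.comp ((henv.meas p).const_mul β)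
    have hindep := (iIndepFun_exp P henv (β := β)).indepFun_finsetProd_of_notMem
      (fun p => hmeas p) ha
    rw [prod_fun_eq] at hindep
    have hprodmeas : Measurable (fun x => ∏ p ∈ s, Real.exp (β * env p x)) :=
      Finset.measurable_prod s fun p _ => hmeas p
    have hmul := hindep.integral_mul_eq_mul_integral
      hprodmeas.aestronglyMeasurable (hmeas a).aestronglyMeasurable
    have heq : (fun x => ∏ p ∈ insert a s, Real.exp (β * env p x))
        = (fun x => ∏ p ∈ s, Real.exp (β * env p x)) * (fun x => Real.exp (β * env a x)) := by
      funext x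
      simp only [Pi.mul_apply]
      rw [Finset.prod_insert ha, mul_comm]
    calc ∫ x, ∏ p ∈ insert a s, Real.exp (β * env p x) ∂P
        = ∫ x, ((fun x => ∏ p ∈ s, Real.exp (β * env p x))
            * fun x => Real.exp (β * env a x)) x ∂P := by rw [heq]
      _ = (∫ x, ∏ p ∈ s, Real.exp (β * env p x) ∂P)
            * ∫ x, Real.exp (β * env a x) ∂P := hmul
      _ = ∏ p ∈ insert a s, ∫ x, Real.exp (β * env p x) ∂P := by
            rw [ih, Finset.prod_insert ha]; ring

-- injectivity of path points and term rewriting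
lemma pts_injective {n : ℕ} (σ : Fin n → Fin d × Bool) :
    Function.Injective (fun i : Fin n => (((i : ℕ) + 1, walkPos σ ((i : ℕ) + 1)) :
      ℕ × (Fin d → ℤ))) := by
  intro i j h
  have : (i : ℕ) + 1 = (j : ℕ) + 1 := congrArg Prod.fst h
  exact Fin.ext (by omega)

lemma prod_over_pts {n : ℕ} (σ : Fin n → Fin d × Bool) (f : ℕ × (Fin d → ℤ) → ℝ) :
    ∏ p ∈ Finset.image (fun i : Fin n =>
        (((i : ℕ) + 1, walkPos σ ((i : ℕ) + 1)) : ℕ × (Fin d → ℤ))) Finset.univ, f p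
      = ∏ i : Fin n, f ((i : ℕ) + 1, walkPos σ ((i : ℕ) + 1)) :=
  Finset.prod_image (fun a _ b _ h => pts_injective σ h)

lemma term_eq_prod {n : ℕ} (lam : ℝ) (σ : Fin n → Fin d × Bool) (x : Ω) :
    Real.exp (β * ∑ i : Fin n, env ((i : ℕ) + 1, walkPos σ ((i : ℕ) + 1)) x - n * lam)
      = Real.exp (-(n * lam)) * ∏ i : Fin n,
          Real.exp (β * env ((i : ℕ) + 1, walkPos σ ((i : ℕ) + 1)) x) := by
  rw [sub_eq_add_neg, add_comm, Real.exp_add, Finset.mul_sum, Real.exp_sum]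

lemma integrable_term (henv : IsIIDEnv P env) (hβ : 0 ≤ β) {n : ℕ} (lam : ℝ)
    (σ : Fin n → Fin d × Bool) :
    Integrable (fun x => Real.exp (β * ∑ i : Fin n,
      env ((i : ℕ) + 1, walkPos σ ((i : ℕ) + 1)) x - n * lam)) P := by
  classical
  set pts := fun i : Fin n => (((i : ℕ) + 1, walkPos σ ((i : ℕ) + 1)) : ℕ × (Fin d → ℤ))
  refine Integrable.mono' (g := fun x => Real.exp (-(n * lam)) *
      ∏ p ∈ Finset.image pts Finset.univ, Real.exp (β * |env p x|)) ?_ ?_ ?_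
  · exact (integrable_prod_exp_abs P henv hβ _).const_mul _
  · apply Measurable.aestronglyMeasurable
    apply Real.measurable_exp.comp
    apply Measurable.sub _ measurable_const
    exact (Finset.measurable_sum _ fun i _ => (henv.meas _)).const_mul β
  · filter_upwards with x
    rw [Real.norm_eq_abs, abs_of_nonneg (Real.exp_nonneg _), term_eq_prod]
    apply mul_le_mul_of_nonneg_left _ (Real.exp_nonneg _)
    rw [show (∏ i : Fin n, Real.exp (β * env ((i : ℕ) + 1, walkPos σ ((i : ℕ) + 1)) x))
      = ∏ p ∈ Finset.image pts Finset.univ, Real.exp (β * env p x) from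
      (prod_over_pts σ (fun p => Real.exp (β * env p x))).symm]
    apply Finset.prod_le_prod (fun p _ => Real.exp_nonneg _)
    intro p _
    exact Real.exp_le_exp.mpr (mul_le_mul_of_nonneg_left (le_abs_self _) hβ)

lemma integrable_W (henv : IsIIDEnv P env) (hβ : 0 ≤ β) (n : ℕ) :
    Integrable (W P env β n) P := by
  unfold W
  apply Integrable.const_mul
  apply integrable_finset_sum
  intro σ _
  exact integrable_term P henv hβ _ σ

lemma integral_W_eq_one (henv : IsIIDEnv P env) (hβ : 0 ≤ β) (hd : 0 < d) (n : ℕ) :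
    ∫ x, W P env β n x ∂P = 1 := by
  classical
  set lam := logMGF P env β with hlam
  set Emgf := ∫ x, Real.exp (β * env (1, 0) x) ∂P with hE
  have hEpos : 0 < Emgf := mgf_pos (X := env (1, 0)) (t := β)
    (integrable_exp P henv hβ (1, 0))
  have hint1 : ∀ p : ℕ × (Fin d → ℤ), ∫ x, Real.exp (β * env p x) ∂P = Emgf := by
    intro p
    exact ((henv.ident p).comp
      (Real.measurable_exp.comp (measurable_id.const_mul β))).integral_eq
  have hterm : ∀ σ : Fin n → Fin d × Bool,
      ∫ x, Real.exp (β * ∑ i : Fin n,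
        env ((i : ℕ) + 1, walkPos σ ((i : ℕ) + 1)) x - n * lam) ∂P = 1 := by
    intro σ
    set pts := fun i : Fin n => (((i : ℕ) + 1, walkPos σ ((i : ℕ) + 1)) : ℕ × (Fin d → ℤ))
    have h1 : ∀ x, Real.exp (β * ∑ i : Fin n,
        env ((i : ℕ) + 1, walkPos σ ((i : ℕ) + 1)) x - n * lam)
        = Real.exp (-(n * lam)) * ∏ p ∈ Finset.image pts Finset.univ,
            Real.exp (β * env p x) := by
      intro x
      rw [term_eq_prod, show (∏ i : Fin n,
        Real.exp (β * env ((i : ℕ) + 1, walkPos σ ((i : ℕ) + 1)) x))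
        = ∏ p ∈ Finset.image pts Finset.univ, Real.exp (β * env p x) from
        (prod_over_pts σ (fun p => Real.exp (β * env p x))).symm]
    simp_rw [h1]
    rw [integral_const_mul _ _, integral_prod_exp P henv]
    have hcard : (Finset.image pts Finset.univ).card = n := by
      rw [Finset.card_image_of_injective _ (pts_injective σ)]
      simp
    rw [Finset.prod_congr rfl (fun p _ => hint1 p), Finset.prod_const, hcard]
    have : Real.exp (-(n * lam)) = (Emgf ^ n)⁻¹ := by
      rw [hlam]
      unfold logMGF
      rw [← hE, Real.exp_neg]
      congr 1
      rw [Real.exp_nat_mul, Real.exp_log hEpos]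
    rw [this, inv_mul_cancel₀ (by positivity)]
  unfold W
  rw [integral_const_mul _ _, integral_finset_sum _ (fun σ _ => integrable_term P henv hβ lam σ)]
  have hcard : (Finset.univ : Finset (Fin n → Fin d × Bool)).card = (2 * d) ^ n := by
    rw [Finset.card_univ, Fintype.card_fun]
    simp [Fintype.card_prod, mul_comm]
  rw [Finset.sum_congr rfl fun σ _ => hterm σ, Finset.sum_const, hcard]
  simp only [nsmul_eq_mul, mul_one]
  rw [inv_pow]
  rw [show (((2 * d) ^ n : ℕ) : ℝ) = ((2 * d : ℝ) ^ n) by push_cast; ring]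
  exact inv_mul_cancel₀ (by positivity)


-- ===== stage 4: box, grid membership, law of shifted tuples =====

def box (d R : ℕ) : Finset (Fin d → ℤ) := Fintype.piFinset fun _ => Finset.Icc (-(R : ℤ)) R

lemma walkPos_mem_box {n : ℕ} (σ : Fin n → Fin d × Bool) {c R : ℕ} (hc : c ≤ R) :
    walkPos σ c ∈ box d R := by
  rw [box, Fintype.mem_piFinset]
  intro i
  have h2 : |walkPos σ c i| ≤ (R : ℤ) :=
    le_trans (abs_walkPos_le σ c i) (by exact_mod_cast hc)
  rw [Finset.mem_Icc]
  exact ⟨neg_le_of_abs_le h2, le_of_abs_le h2⟩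

lemma pt_mem_grid {m : ℕ} (σ : Fin m → Fin d × Bool) (i : Fin m) :
    (((i : ℕ) + 1, walkPos σ ((i : ℕ) + 1)) : ℕ × (Fin d → ℤ))
      ∈ Finset.Icc 1 m ×ˢ box d m := by
  rw [Finset.mem_product, Finset.mem_Icc]
  exact ⟨⟨by omega, by have := i.isLt; omega⟩, walkPos_mem_box σ (by have := i.isLt; omega)⟩

lemma map_tuple_eq_pi (henv : IsIIDEnv P env) (J : Finset (ℕ × (Fin d → ℤ)))
    (ι : J → ℕ × (Fin d → ℤ)) (hι : Function.Injective ι) :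
    Measure.map (fun x (q : J) => env (ι q) x) P
      = Measure.pi (fun _ : J => Measure.map (env (1, 0)) P) := by
  classical
  haveI : IsProbabilityMeasure (Measure.map (env (1, 0)) P) :=
    Measure.isProbabilityMeasure_map (henv.meas _).aemeasurable
  have hTmeas : Measurable (fun x (q : J) => env (ι q) x) :=
    measurable_pi_lambda _ fun q => henv.meas _
  refine (Measure.pi_eq fun s hs => ?_).symm
  rw [Measure.map_apply hTmeas (MeasurableSet.univ_pi hs)]
  set sets : (ℕ × (Fin d → ℤ)) → Set ℝ := fun p => ⋂ (q : J) (_ : ι q = p), s q with hsets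
  have hsetsm : ∀ p, MeasurableSet (sets p) :=
    fun p => MeasurableSet.iInter fun q => MeasurableSet.iInter fun _ => hs q
  have hsets_eq : ∀ q : J, sets (ι q) = s q := by
    intro q
    apply Set.Subset.antisymm
    · intro x hx
      exact Set.mem_iInter.mp (Set.mem_iInter.mp hx q) rfl
    · intro x hx
      apply Set.mem_iInter.mpr; intro q'
      apply Set.mem_iInter.mpr; intro hq'
      rw [hι hq']
      exact hx
  have hpre : (fun x (q : J) => env (ι q) x) ⁻¹' (Set.univ.pi s)
      = ⋂ p ∈ Finset.image ι Finset.univ, env p ⁻¹' sets p := by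
    ext x
    simp only [Set.mem_preimage, Set.mem_univ_pi, Set.mem_iInter, Finset.mem_image,
      Finset.mem_univ, true_and, Set.mem_preimage]
    constructor
    · rintro h p ⟨q, rfl⟩
      rw [hsets_eq q]
      exact h q
    · intro h q
      have := h (ι q) ⟨q, rfl⟩
      rwa [hsets_eq q] at this
  rw [hpre, henv.indep.measure_inter_preimage_eq_mul _ (fun p _ => hsetsm p)]
  rw [Finset.prod_image (fun a _ b _ h => hι h)]
  refine Finset.prod_congr rfl fun q _ => ?_
  rw [hsets_eq q, Measure.map_apply (henv.meas _) (hs q)]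
  exact (henv.ident (ι q)).measure_mem_eq (hs q)

def restr (d : ℕ) (S : Finset (ℕ × (Fin d → ℤ))) (g : (q : S) → ℝ) :
    ℕ × (Fin d → ℤ) → ℝ :=
  fun p => if h : p ∈ S then g ⟨p, h⟩ else 0

lemma measurable_restr (d : ℕ) (S : Finset (ℕ × (Fin d → ℤ))) :
    Measurable (restr d S) := by
  apply measurable_pi_lambda
  intro p
  unfold restr
  by_cases h : p ∈ S
  · simp only [dif_pos h]
    exact measurable_pi_apply _
  · simp only [dif_neg h]
    exact measurable_const

lemma identDistrib_W_shift (henv : IsIIDEnv P env) (k m : ℕ) (y : Fin d → ℤ) :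
    IdentDistrib (W P (shiftEnv k y env) β m) (W P env β m) P P := by
  classical
  have hΦmeas : Measurable (fun g => WF d β (logMGF P env β) m
      (restr d (Finset.Icc 1 m ×ˢ box d m) g)) :=
    (measurable_WF m).comp (measurable_restr _ _)
  have hW : W P env β m = (fun g => WF d β (logMGF P env β) m
        (restr d (Finset.Icc 1 m ×ˢ box d m) g))
      ∘ (fun x (q : (Finset.Icc 1 m ×ˢ box d m : Finset (ℕ × (Fin d → ℤ)))) => env (↑q) x) := by
    funext x
    rw [W_eq_WF]
    show WF _ _ _ _ _ = WF _ _ _ _ _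
    refine WF_congr fun σ i => ?_
    show env _ x = restr d _ _ _
    unfold restr
    rw [dif_pos (pt_mem_grid σ i)]
  have hW' : W P (shiftEnv k y env) β m = (fun g => WF d β (logMGF P env β) m
        (restr d (Finset.Icc 1 m ×ˢ box d m) g))
      ∘ (fun x (q : (Finset.Icc 1 m ×ˢ box d m : Finset (ℕ × (Fin d → ℤ)))) =>
          env (k + (↑q : ℕ × (Fin d → ℤ)).1, y + (↑q : ℕ × (Fin d → ℤ)).2) x) := by
    funext x
    rw [W_shift_eq P henv]
    show WF _ _ _ _ _ = WF _ _ _ _ _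
    refine WF_congr fun σ i => ?_
    show env _ x = restr d _ _ _
    unfold restr
    rw [dif_pos (pt_mem_grid σ i)]
  have hmapT := map_tuple_eq_pi P henv (Finset.Icc 1 m ×ˢ box d m) (fun q => ↑q)
    Subtype.val_injective
  have hι' : Function.Injective
      (fun q : (Finset.Icc 1 m ×ˢ box d m : Finset (ℕ × (Fin d → ℤ))) =>
      ((k + (↑q : ℕ × (Fin d → ℤ)).1, y + (↑q : ℕ × (Fin d → ℤ)).2) : ℕ × (Fin d → ℤ))) := by
    intro a b h
    apply Subtype.ext
    have h1 := congrArg Prod.fst h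
    have h2 := congrArg Prod.snd h
    simp only [add_right_inj] at h1 h2
    exact Prod.ext h1 h2
  have hmapT' := map_tuple_eq_pi P henv (Finset.Icc 1 m ×ˢ box d m) _ hι'
  have hT : Measurable (fun x (q : (Finset.Icc 1 m ×ˢ box d m : Finset (ℕ × (Fin d → ℤ)))) =>
      env (↑q) x) := measurable_pi_lambda _ fun q => henv.meas _
  have hT' : Measurable (fun x (q : (Finset.Icc 1 m ×ˢ box d m : Finset (ℕ × (Fin d → ℤ)))) =>
      env (k + (↑q : ℕ × (Fin d → ℤ)).1, y + (↑q : ℕ × (Fin d → ℤ)).2) x) :=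
    measurable_pi_lambda _ fun q => henv.meas _
  refine ⟨(measurable_W_shift P henv k m y).aemeasurable,
    (measurable_W P henv m).aemeasurable, ?_⟩
  rw [hW, hW', ← Measure.map_map hΦmeas hT', ← Measure.map_map hΦmeas hT, hmapT, hmapT']

lemma measure_W_shift_ge (henv : IsIIDEnv P env) (k m : ℕ) (y : Fin d → ℤ) (c : ℝ) :
    P {x | c ≤ W P (shiftEnv k y env) β m x} = P {x | c ≤ W P env β m x} :=
  (identDistrib_W_shift P henv k m y).measure_mem_eq (measurableSet_Ici (a := c))


-- ===== stage 5: first-passage sets and the core estimate =====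

lemma pt_mem_grid' {j k : ℕ} (hj : j ≤ k) (σ : Fin j → Fin d × Bool) (i : Fin j) :
    (((i : ℕ) + 1, walkPos σ ((i : ℕ) + 1)) : ℕ × (Fin d → ℤ))
      ∈ Finset.Icc 1 k ×ˢ box d k := by
  rw [Finset.mem_product, Finset.mem_Icc]
  exact ⟨⟨by omega, by have := i.isLt; omega⟩,
    walkPos_mem_box σ (by have := i.isLt; omega)⟩

lemma shiftpt_mem_grid2 {k m : ℕ} (τ : Fin k → Fin d × Bool) (σ : Fin m → Fin d × Bool)
    (i : Fin m) :
    ((k + ((i : ℕ) + 1), walkPos τ k + walkPos σ ((i : ℕ) + 1)) : ℕ × (Fin d → ℤ))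
      ∈ Finset.Icc (k + 1) (k + m) ×ˢ box d (k + m) := by
  rw [Finset.mem_product, Finset.mem_Icc, box, Fintype.mem_piFinset]
  refine ⟨⟨by omega, by have := i.isLt; omega⟩, fun a => ?_⟩
  show (walkPos τ k + walkPos σ ((i : ℕ) + 1)) a ∈ _
  rw [Pi.add_apply, Finset.mem_Icc, ← abs_le]
  refine le_trans (abs_add_le _ _) ?_
  have h1 := abs_walkPos_le τ k a
  have h2 := abs_walkPos_le σ ((i : ℕ) + 1) a
  have h3 : (i : ℕ) < m := i.isLt
  push_cast
  push_cast at h2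
  omega

/-- The first-passage event: `W` exceeds `t` for the first time at step `k`. -/
def EkSet {d : ℕ} (P : Measure Ω) (env : ℕ × (Fin d → ℤ) → Ω → ℝ) (β t : ℝ) (k : ℕ) : Set Ω :=
  {x | t < W P env β k x ∧ ∀ j, j < k → W P env β j x ≤ t}

/-- The conditional fraction of surviving restarted partition functions. -/
def ZFun {d : ℕ} (P : Measure Ω) (env : ℕ × (Fin d → ℤ) → Ω → ℝ) (β c : ℝ) (k m : ℕ)
    (x : Ω) : ℝ :=
  ∑ τ : Fin k → Fin d × Bool,
    wgtF d β (logMGF P env β) k τ (fun p => env p x) / W P env β k x *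
      Set.indicator {x' | c ≤ W P (shiftEnv k (walkPos τ k) env) β m x'} 1 x

lemma measurable_wgt_env (henv : IsIIDEnv P env) (lam : ℝ) (k : ℕ)
    (τ : Fin k → Fin d × Bool) :
    Measurable (fun x => wgtF d β lam k τ (fun p => env p x)) :=
  (measurable_wgtF k τ).comp (measurable_pi_lambda _ fun p => henv.meas p)

lemma measurableSet_EkSet (henv : IsIIDEnv P env) (t : ℝ) (k : ℕ) :
    MeasurableSet (EkSet P env β t k) := by
  have h1 : EkSet P env β t k = (W P env β k ⁻¹' Set.Ioi t) ∩
      ⋂ (j : ℕ) (_ : j < k), W P env β j ⁻¹' Set.Iic t := by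
    ext x
    simp [EkSet, Set.mem_iInter]
  rw [h1]
  exact ((measurable_W P henv k) measurableSet_Ioi).inter
    (MeasurableSet.iInter fun j => MeasurableSet.iInter fun _ =>
      (measurable_W P henv j) measurableSet_Iic)

lemma measurableSet_A (henv : IsIIDEnv P env) (c : ℝ) (k m : ℕ) (y : Fin d → ℤ) :
    MeasurableSet {x | c ≤ W P (shiftEnv k y env) β m x} :=
  (measurable_W_shift P henv k m y) measurableSet_Ici

lemma measurable_ZFun (henv : IsIIDEnv P env) (c : ℝ) (k m : ℕ) :
    Measurable (ZFun P env β c k m) := by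
  apply Finset.measurable_sum
  intro τ _
  exact ((measurable_wgt_env P henv _ k τ).div (measurable_W P henv k)).mul
    (measurable_one.indicator (measurableSet_A P henv c k m _))

lemma ZFun_nonneg (hd : 0 < d) (c : ℝ) (k m : ℕ) (x : Ω) : 0 ≤ ZFun P env β c k m x := by
  apply Finset.sum_nonneg
  intro τ _
  apply mul_nonneg
  · apply div_nonneg (wgtF_nonneg τ _)
    rw [W_eq_WF]
    exact WF_nonneg _ _
  · exact Set.indicator_nonneg (fun _ _ => zero_le_one) x

lemma ZFun_le_one (hd : 0 < d) (c : ℝ) (k m : ℕ) (x : Ω) : ZFun P env β c k m x ≤ 1 := by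
  have hWpos : 0 < W P env β k x := by rw [W_eq_WF]; exact WF_pos hd _ _
  have h1 : ZFun P env β c k m x ≤ ∑ τ : Fin k → Fin d × Bool,
      wgtF d β (logMGF P env β) k τ (fun p => env p x) / W P env β k x := by
    apply Finset.sum_le_sum
    intro τ _
    have hnn : 0 ≤ wgtF d β (logMGF P env β) k τ (fun p => env p x) / W P env β k x :=
      div_nonneg (wgtF_nonneg τ _) hWpos.le
    calc wgtF d β (logMGF P env β) k τ (fun p => env p x) / W P env β k x *
          Set.indicator {x' | c ≤ W P (shiftEnv k (walkPos τ k) env) β m x'} 1 x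
        ≤ wgtF d β (logMGF P env β) k τ (fun p => env p x) / W P env β k x * 1 := by
          apply mul_le_mul_of_nonneg_left _ hnn
          exact Set.indicator_le_self' (fun _ _ => zero_le_one) x
      _ = _ := mul_one _
  calc ZFun P env β c k m x ≤ _ := h1
    _ = 1 := by
      rw [← Finset.sum_div, sum_wgtF, ← W_eq_WF, div_self hWpos.ne']

def H1F (d : ℕ) (β lam t : ℝ) (k : ℕ) (τ : Fin k → Fin d × Bool) :
    (ℕ × (Fin d → ℤ) → ℝ) → ℝ :=
  Set.indicator {F' | t < WF d β lam k F' ∧ ∀ j, j < k → WF d β lam j F' ≤ t}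
    (fun F' => wgtF d β lam k τ F' / WF d β lam k F')

def H2F (d : ℕ) (β lam c : ℝ) (k m : ℕ) (y : Fin d → ℤ) :
    (ℕ × (Fin d → ℤ) → ℝ) → ℝ :=
  Set.indicator {F' | c ≤ WF d β lam m (fun p => F' (k + p.1, y + p.2))} (fun _ => (1 : ℝ))

/-- Independence of the first-passage data up to time `k` from the restarted
partition function. -/
lemma indep_fg (henv : IsIIDEnv P env) (t c : ℝ) (k m : ℕ) (τ : Fin k → Fin d × Bool) :
    IndepFun
      (Set.indicator (EkSet P env β t k)
        (fun x => wgtF d β (logMGF P env β) k τ (fun p => env p x) / W P env β k x))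
      (Set.indicator {x | c ≤ W P (shiftEnv k (walkPos τ k) env) β m x} (1 : Ω → ℝ)) P := by
  classical
  set lam := logMGF P env β with hlam
  set S1 : Finset (ℕ × (Fin d → ℤ)) := Finset.Icc 1 k ×ˢ box d k with hS1
  set S2 : Finset (ℕ × (Fin d → ℤ)) := Finset.Icc (k + 1) (k + m) ×ˢ box d (k + m) with hS2
  set y := walkPos τ k with hy
  have hdisj : Disjoint S1 S2 := by
    rw [Finset.disjoint_left]
    intro p hp1 hp2
    rw [hS1, Finset.mem_product, Finset.mem_Icc] at hp1
    rw [hS2, Finset.mem_product, Finset.mem_Icc] at hp2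
    omega
  have hIndepT := henv.indep.indepFun_finset S1 S2 hdisj henv.meas
  have hH1m : Measurable (H1F d β lam t k τ) := by
    have hset : {F' | t < WF d β lam k F' ∧ ∀ j, j < k → WF d β lam j F' ≤ t}
        = (WF d β lam k ⁻¹' Set.Ioi t) ∩
          ⋂ (j : ℕ) (_ : j < k), WF d β lam j ⁻¹' Set.Iic t := by
      ext F
      simp [Set.mem_iInter]
    unfold H1F
    apply Measurable.indicator
    · exact (measurable_wgtF k τ).div (measurable_WF k)
    · rw [hset]
      exact ((measurable_WF k) measurableSet_Ioi).inter
        (MeasurableSet.iInter fun j => MeasurableSet.iInter fun _ =>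
          (measurable_WF j) measurableSet_Iic)
  have hH2m : Measurable (H2F d β lam c k m y) := by
    unfold H2F
    apply Measurable.indicator measurable_const
    have : {F' : ℕ × (Fin d → ℤ) → ℝ | c ≤ WF d β lam m (fun p => F' (k + p.1, y + p.2))}
        = (fun F' : ℕ × (Fin d → ℤ) → ℝ => WF d β lam m (fun p => F' (k + p.1, y + p.2)))
          ⁻¹' Set.Ici c := rfl
    rw [this]
    exact ((measurable_WF m).comp
      (measurable_pi_lambda _ fun p => measurable_pi_apply _)) measurableSet_Ici
  have hf_eq : (Set.indicator (EkSet P env β t k)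
        (fun x => wgtF d β lam k τ (fun p => env p x) / W P env β k x))
      = (H1F d β lam t k τ ∘ restr d S1) ∘ (fun x (q : S1) => env (↑q) x) := by
    funext x
    have hWj : ∀ j, j ≤ k →
        WF d β lam j (restr d S1 (fun q : S1 => env (↑q) x)) = W P env β j x := by
      intro j hj
      rw [W_eq_WF]
      refine WF_congr fun σ i => ?_
      show restr d S1 _ _ = _
      unfold restr
      rw [dif_pos (pt_mem_grid' hj σ i)]
    have hwgt : wgtF d β lam k τ (restr d S1 (fun q : S1 => env (↑q) x))
        = wgtF d β lam k τ (fun p => env p x) := by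
      refine wgtF_congr fun i => ?_
      show restr d S1 _ _ = _
      unfold restr
      rw [dif_pos (pt_mem_grid' le_rfl τ i)]
    have hmem : restr d S1 (fun q : S1 => env (↑q) x) ∈
        {F' | t < WF d β lam k F' ∧ ∀ j, j < k → WF d β lam j F' ≤ t}
        ↔ x ∈ EkSet P env β t k := by
      simp only [Set.mem_setOf_eq, EkSet]
      rw [hWj k le_rfl]
      constructor
      · rintro ⟨h1, h2⟩
        exact ⟨h1, fun j hj => by rw [← hWj j hj.le]; exact h2 j hj⟩
      · rintro ⟨h1, h2⟩
        exact ⟨h1, fun j hj => by rw [hWj j hj.le]; exact h2 j hj⟩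
    show _ = H1F d β lam t k τ (restr d S1 (fun q : S1 => env (↑q) x))
    unfold H1F
    by_cases hx : x ∈ EkSet P env β t k
    · rw [Set.indicator_of_mem hx, Set.indicator_of_mem (hmem.mpr hx)]
      rw [hWj k le_rfl, hwgt]
    · rw [Set.indicator_of_notMem hx,
        Set.indicator_of_notMem (fun hmem' => hx (hmem.mp hmem'))]
  have hg_eq : (Set.indicator {x | c ≤ W P (shiftEnv k y env) β m x} (1 : Ω → ℝ))
      = (H2F d β lam c k m y ∘ restr d S2) ∘ (fun x (q : S2) => env (↑q) x) := by
    funext x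
    have hWS : WF d β lam m
        (fun p => restr d S2 (fun q : S2 => env (↑q) x) (k + p.1, y + p.2))
        = W P (shiftEnv k y env) β m x := by
      rw [W_shift_eq P henv]
      refine WF_congr fun σ i => ?_
      show restr d S2 _ _ = _
      unfold restr
      rw [dif_pos (by rw [hy, hS2]; exact shiftpt_mem_grid2 τ σ i)]
    have hmem : restr d S2 (fun q : S2 => env (↑q) x) ∈
        {F' | c ≤ WF d β lam m (fun p => F' (k + p.1, y + p.2))}
        ↔ x ∈ {x' | c ≤ W P (shiftEnv k y env) β m x'} := by
      simp only [Set.mem_setOf_eq]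
      rw [hWS]
    show _ = H2F d β lam c k m y (restr d S2 (fun q : S2 => env (↑q) x))
    unfold H2F
    by_cases hx : x ∈ {x' | c ≤ W P (shiftEnv k y env) β m x'}
    · rw [Set.indicator_of_mem hx, Set.indicator_of_mem (hmem.mpr hx)]
      rfl
    · rw [Set.indicator_of_notMem hx,
        Set.indicator_of_notMem (fun hmem' => hx (hmem.mp hmem'))]
  rw [hf_eq, hg_eq]
  exact hIndepT.comp (hH1m.comp (measurable_restr d S1)) (hH2m.comp (measurable_restr d S2))


lemma W_pos (hd : 0 < d) (n : ℕ) (x : Ω) : 0 < W P env β n x := by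
  rw [W_eq_WF]; exact WF_pos hd _ _

lemma W_nonneg (n : ℕ) (x : Ω) : 0 ≤ W P env β n x := by
  rw [W_eq_WF]; exact WF_nonneg _ _

lemma W_shift_nonneg (henv : IsIIDEnv P env) (k m : ℕ) (y : Fin d → ℤ) (x : Ω) :
    0 ≤ W P (shiftEnv k y env) β m x := by
  rw [W_shift_eq P henv]; exact WF_nonneg _ _

lemma core_estimate (henv : IsIIDEnv P env) (hd : 0 < d) {δ c : ℝ} (hδ : 0 < δ) (hc : 0 < c)
    (hlow : ∀ m', δ ≤ (P {x | c ≤ W P env β m' x}).toReal) (t : ℝ) (k m : ℕ) :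
    δ / 2 * (P (EkSet P env β t k)).toReal
      ≤ (P (EkSet P env β t k ∩ {x | δ / 2 ≤ ZFun P env β c k m x})).toReal := by
  classical
  have hEk : MeasurableSet (EkSet P env β t k) := measurableSet_EkSet P henv t k
  have hG : MeasurableSet {x | δ / 2 ≤ ZFun P env β c k m x} :=
    measurableSet_le measurable_const (measurable_ZFun P henv c k m)
  have hA : ∀ τ : Fin k → Fin d × Bool,
      MeasurableSet {x | c ≤ W P (shiftEnv k (walkPos τ k) env) β m x} :=
    fun τ => measurableSet_A P henv c k m _
  have hWpos : ∀ x, 0 < W P env β k x := fun x => W_pos P hd k x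
  have hf_nonneg : ∀ (τ : Fin k → Fin d × Bool) (x : Ω),
      0 ≤ Set.indicator (EkSet P env β t k)
        (fun x' => wgtF d β (logMGF P env β) k τ (fun p => env p x') / W P env β k x') x :=
    fun τ x => Set.indicator_nonneg
      (fun x' _ => div_nonneg (wgtF_nonneg τ _) (hWpos x').le) x
  have hf_le_one : ∀ (τ : Fin k → Fin d × Bool) (x : Ω),
      Set.indicator (EkSet P env β t k)
        (fun x' => wgtF d β (logMGF P env β) k τ (fun p => env p x') / W P env β k x') x
        ≤ 1 := by
    intro τ x
    by_cases hx : x ∈ EkSet P env β t k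
    · rw [Set.indicator_of_mem hx, div_le_one (hWpos x)]
      calc wgtF d β (logMGF P env β) k τ (fun p => env p x)
          ≤ WF d β (logMGF P env β) k (fun p => env p x) := wgtF_le_WF τ _
        _ = W P env β k x := (W_eq_WF P env k x).symm
    · rw [Set.indicator_of_notMem hx]; norm_num
  have hg_nonneg : ∀ (τ : Fin k → Fin d × Bool) (x : Ω),
      0 ≤ Set.indicator {x' | c ≤ W P (shiftEnv k (walkPos τ k) env) β m x'} (1 : Ω → ℝ) x :=
    fun τ x => Set.indicator_nonneg (fun _ _ => zero_le_one) x
  have hg_le_one : ∀ (τ : Fin k → Fin d × Bool) (x : Ω),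
      Set.indicator {x' | c ≤ W P (shiftEnv k (walkPos τ k) env) β m x'} (1 : Ω → ℝ) x
        ≤ 1 := by
    intro τ x
    by_cases hx : x ∈ {x' | c ≤ W P (shiftEnv k (walkPos τ k) env) β m x'}
    · rw [Set.indicator_of_mem hx]; exact le_rfl
    · rw [Set.indicator_of_notMem hx]; norm_num
  have hfmeas : ∀ τ : Fin k → Fin d × Bool, Measurable (Set.indicator (EkSet P env β t k)
      (fun x' => wgtF d β (logMGF P env β) k τ (fun p => env p x') / W P env β k x')) :=
    fun τ => ((measurable_wgt_env P henv _ k τ).div (measurable_W P henv k)).indicator hEk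
  have hgmeas : ∀ τ : Fin k → Fin d × Bool, Measurable
      (Set.indicator {x' | c ≤ W P (shiftEnv k (walkPos τ k) env) β m x'} (1 : Ω → ℝ)) :=
    fun τ => measurable_one.indicator (hA τ)
  have hf_int : ∀ τ : Fin k → Fin d × Bool, Integrable (Set.indicator (EkSet P env β t k)
      (fun x' => wgtF d β (logMGF P env β) k τ (fun p => env p x') / W P env β k x')) P := by
    intro τ
    refine (integrable_const (1 : ℝ)).mono' (hfmeas τ).aestronglyMeasurable ?_
    filter_upwards with x
    rw [Real.norm_eq_abs, abs_of_nonneg (hf_nonneg τ x)]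
    exact hf_le_one τ x
  have hfg_int : ∀ τ : Fin k → Fin d × Bool, Integrable (fun x =>
      Set.indicator (EkSet P env β t k)
        (fun x' => wgtF d β (logMGF P env β) k τ (fun p => env p x') / W P env β k x') x *
      Set.indicator {x' | c ≤ W P (shiftEnv k (walkPos τ k) env) β m x'} (1 : Ω → ℝ) x) P := by
    intro τ
    refine (integrable_const (1 : ℝ)).mono'
      ((hfmeas τ).mul (hgmeas τ)).aestronglyMeasurable ?_
    filter_upwards with x
    rw [Real.norm_eq_abs, abs_of_nonneg (mul_nonneg (hf_nonneg τ x) (hg_nonneg τ x))]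
    calc _ ≤ 1 * 1 := mul_le_mul (hf_le_one τ x) (hg_le_one τ x) (hg_nonneg τ x) zero_le_one
      _ = (1:ℝ) := mul_one 1
  have hmul : ∀ τ : Fin k → Fin d × Bool, (∫ x, Set.indicator (EkSet P env β t k)
        (fun x' => wgtF d β (logMGF P env β) k τ (fun p => env p x') / W P env β k x') x *
        Set.indicator {x' | c ≤ W P (shiftEnv k (walkPos τ k) env) β m x'} (1 : Ω → ℝ) x ∂P)
      = (∫ x, Set.indicator (EkSet P env β t k)
          (fun x' => wgtF d β (logMGF P env β) k τ (fun p => env p x') / W P env β k x') x ∂P)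
        * ∫ x, Set.indicator {x' | c ≤ W P (shiftEnv k (walkPos τ k) env) β m x'}
            (1 : Ω → ℝ) x ∂P :=
    fun τ => (indep_fg P henv t c k m τ).integral_mul_eq_mul_integral
      (hfmeas τ).aestronglyMeasurable (hgmeas τ).aestronglyMeasurable
  have hg_ge : ∀ τ : Fin k → Fin d × Bool,
      δ ≤ ∫ x, Set.indicator {x' | c ≤ W P (shiftEnv k (walkPos τ k) env) β m x'}
        (1 : Ω → ℝ) x ∂P := by
    intro τ
    rw [integral_indicator_one (hA τ), measureReal_def, measure_W_shift_ge P henv k m _ c]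
    exact hlow m
  have hsumf : ∀ x, (∑ τ : Fin k → Fin d × Bool, Set.indicator (EkSet P env β t k)
        (fun x' => wgtF d β (logMGF P env β) k τ (fun p => env p x') / W P env β k x') x)
      = Set.indicator (EkSet P env β t k) (1 : Ω → ℝ) x := by
    intro x
    by_cases hx : x ∈ EkSet P env β t k
    · rw [Set.indicator_of_mem hx]
      rw [Finset.sum_congr rfl (fun (τ : Fin k → Fin d × Bool) _ =>
        Set.indicator_of_mem hx
          (fun x' => wgtF d β (logMGF P env β) k τ (fun p => env p x') / W P env β k x'))]
      rw [← Finset.sum_div, sum_wgtF, ← W_eq_WF, div_self (hWpos x).ne']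
      rfl
    · rw [Set.indicator_of_notMem hx]
      exact Finset.sum_eq_zero fun τ _ => Set.indicator_of_notMem hx _
  have hsum_int : (∑ τ : Fin k → Fin d × Bool, ∫ x, Set.indicator (EkSet P env β t k)
        (fun x' => wgtF d β (logMGF P env β) k τ (fun p => env p x') / W P env β k x') x ∂P)
      = (P (EkSet P env β t k)).toReal := by
    rw [← integral_finset_sum _ fun τ _ => hf_int τ]
    rw [integral_congr_ae (Filter.Eventually.of_forall hsumf)]
    exact integral_indicator_one hEk
  have hlower : δ * (P (EkSet P env β t k)).toReal
      ≤ ∑ τ : Fin k → Fin d × Bool, ∫ x, Set.indicator (EkSet P env β t k)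
          (fun x' => wgtF d β (logMGF P env β) k τ (fun p => env p x') / W P env β k x') x *
          Set.indicator {x' | c ≤ W P (shiftEnv k (walkPos τ k) env) β m x'}
            (1 : Ω → ℝ) x ∂P := by
    rw [← hsum_int, Finset.mul_sum]
    apply Finset.sum_le_sum
    intro τ _
    rw [hmul τ, mul_comm δ _]
    exact mul_le_mul_of_nonneg_left (hg_ge τ) (integral_nonneg (hf_nonneg τ))
  have hptwise : ∀ x, (∑ τ : Fin k → Fin d × Bool, Set.indicator (EkSet P env β t k)
        (fun x' => wgtF d β (logMGF P env β) k τ (fun p => env p x') / W P env β k x') x *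
        Set.indicator {x' | c ≤ W P (shiftEnv k (walkPos τ k) env) β m x'} (1 : Ω → ℝ) x)
      ≤ δ / 2 * Set.indicator (EkSet P env β t k) (1 : Ω → ℝ) x
        + Set.indicator (EkSet P env β t k ∩ {x' | δ / 2 ≤ ZFun P env β c k m x'})
            (1 : Ω → ℝ) x := by
    intro x
    by_cases hx : x ∈ EkSet P env β t k
    · have hLHS : (∑ τ : Fin k → Fin d × Bool, Set.indicator (EkSet P env β t k)
          (fun x' => wgtF d β (logMGF P env β) k τ (fun p => env p x') / W P env β k x') x *
          Set.indicator {x' | c ≤ W P (shiftEnv k (walkPos τ k) env) β m x'} (1 : Ω → ℝ) x)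
          = ZFun P env β c k m x := by
        rw [ZFun]
        exact Finset.sum_congr rfl fun τ _ => by rw [Set.indicator_of_mem hx]
      rw [hLHS, Set.indicator_of_mem hx, Pi.one_apply, mul_one]
      by_cases hZ : x ∈ {x' | δ / 2 ≤ ZFun P env β c k m x'}
      · rw [Set.indicator_of_mem (Set.mem_inter hx hZ), Pi.one_apply]
        have h1 := ZFun_le_one (env := env) (β := β) P hd c k m x
        linarith
      · rw [Set.indicator_of_notMem (fun hmem => hZ hmem.2)]
        simp only [Set.mem_setOf_eq, not_le] at hZ
        linarith
    · have hLHS : (∑ τ : Fin k → Fin d × Bool, Set.indicator (EkSet P env β t k)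
          (fun x' => wgtF d β (logMGF P env β) k τ (fun p => env p x') / W P env β k x') x *
          Set.indicator {x' | c ≤ W P (shiftEnv k (walkPos τ k) env) β m x'} (1 : Ω → ℝ) x)
          = 0 :=
        Finset.sum_eq_zero fun τ _ => by rw [Set.indicator_of_notMem hx, zero_mul]
      rw [hLHS]
      have h1 : (0:ℝ) ≤ δ / 2 * Set.indicator (EkSet P env β t k) (1 : Ω → ℝ) x :=
        mul_nonneg (by positivity) (Set.indicator_nonneg (fun _ _ => zero_le_one) x)
      have h2 : (0:ℝ) ≤ Set.indicator
          (EkSet P env β t k ∩ {x' | δ / 2 ≤ ZFun P env β c k m x'}) (1 : Ω → ℝ) x :=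
        Set.indicator_nonneg (fun _ _ => zero_le_one) x
      linarith
  have hi1 : Integrable (fun x => δ / 2 * Set.indicator (EkSet P env β t k)
      (1 : Ω → ℝ) x) P := ((integrable_const (1:ℝ)).indicator hEk).const_mul (δ / 2)
  have hi2 : Integrable (Set.indicator
      (EkSet P env β t k ∩ {x' | δ / 2 ≤ ZFun P env β c k m x'}) (1 : Ω → ℝ)) P :=
    (integrable_const (1:ℝ)).indicator (hEk.inter hG)
  have hupper : (∑ τ : Fin k → Fin d × Bool, ∫ x, Set.indicator (EkSet P env β t k)
        (fun x' => wgtF d β (logMGF P env β) k τ (fun p => env p x') / W P env β k x') x *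
        Set.indicator {x' | c ≤ W P (shiftEnv k (walkPos τ k) env) β m x'}
          (1 : Ω → ℝ) x ∂P)
      ≤ δ / 2 * (P (EkSet P env β t k)).toReal
        + (P (EkSet P env β t k ∩ {x' | δ / 2 ≤ ZFun P env β c k m x'})).toReal := by
    rw [← integral_finset_sum _ fun τ _ => hfg_int τ]
    calc _ ≤ ∫ x, (δ / 2 * Set.indicator (EkSet P env β t k) (1 : Ω → ℝ) x
          + Set.indicator (EkSet P env β t k ∩ {x' | δ / 2 ≤ ZFun P env β c k m x'})
              (1 : Ω → ℝ) x) ∂P :=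
        integral_mono (integrable_finset_sum _ fun τ _ => hfg_int τ) (hi1.add hi2) hptwise
      _ = δ / 2 * (P (EkSet P env β t k)).toReal
          + (P (EkSet P env β t k ∩ {x' | δ / 2 ≤ ZFun P env β c k m x'})).toReal := by
        rw [integral_add hi1 hi2, integral_const_mul, integral_indicator_one hEk,
          integral_indicator_one (hEk.inter hG), measureReal_def, measureReal_def]
  have := le_trans hlower hupper
  linarith

lemma Ek_G_subset (henv : IsIIDEnv P env) (hd : 0 < d) {δ c : ℝ} (hδ : 0 < δ) (hc : 0 < c)
    {t : ℝ} (k m : ℕ) :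
    EkSet P env β t k ∩ {x | δ / 2 ≤ ZFun P env β c k m x}
      ⊆ {x | c * (δ / 2) * t < W P env β (k + m) x} := by
  rintro x ⟨hxE, hxG⟩
  set lam := logMGF P env β with hlam
  have hWpos : 0 < W P env β k x := W_pos P hd k x
  have hterm : ∀ τ : Fin k → Fin d × Bool,
      wgtF d β lam k τ (fun p => env p x) *
        (c * Set.indicator {x' | c ≤ W P (shiftEnv k (walkPos τ k) env) β m x'} 1 x)
      ≤ wgtF d β lam k τ (fun p => env p x) * W P (shiftEnv k (walkPos τ k) env) β m x := by
    intro τ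
    apply mul_le_mul_of_nonneg_left _ (wgtF_nonneg τ _)
    by_cases hx : x ∈ {x' | c ≤ W P (shiftEnv k (walkPos τ k) env) β m x'}
    · rw [Set.indicator_of_mem hx, Pi.one_apply, mul_one]
      exact hx
    · rw [Set.indicator_of_notMem hx, mul_zero]
      exact W_shift_nonneg P henv k m _ x
  have hZW : (∑ τ : Fin k → Fin d × Bool, wgtF d β lam k τ (fun p => env p x) *
      (c * Set.indicator {x' | c ≤ W P (shiftEnv k (walkPos τ k) env) β m x'} 1 x))
      = c * (ZFun P env β c k m x * W P env β k x) := by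
    rw [ZFun, Finset.sum_mul, Finset.mul_sum]
    refine Finset.sum_congr rfl fun τ _ => ?_
    field_simp
    ring
  show c * (δ / 2) * t < W P env β (k + m) x
  have hEt : t < W P env β k x := hxE.1
  calc c * (δ / 2) * t < c * (δ / 2) * W P env β k x := by
        apply mul_lt_mul_of_pos_left hEt (by positivity)
    _ ≤ c * (ZFun P env β c k m x * W P env β k x) := by
        have h1 : δ / 2 * W P env β k x ≤ ZFun P env β c k m x * W P env β k x :=
          mul_le_mul_of_nonneg_right hxG hWpos.le
        calc c * (δ / 2) * W P env β k x = c * (δ / 2 * W P env β k x) := by ring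
          _ ≤ c * (ZFun P env β c k m x * W P env β k x) :=
            mul_le_mul_of_nonneg_left h1 hc.le
    _ = ∑ τ : Fin k → Fin d × Bool, wgtF d β lam k τ (fun p => env p x) *
          (c * Set.indicator {x' | c ≤ W P (shiftEnv k (walkPos τ k) env) β m x'} 1 x) :=
        hZW.symm
    _ ≤ ∑ τ : Fin k → Fin d × Bool, wgtF d β lam k τ (fun p => env p x) *
          W P (shiftEnv k (walkPos τ k) env) β m x :=
        Finset.sum_le_sum fun τ _ => hterm τ
    _ = W P env β (k + m) x := (W_decomp P henv k m x).symm


-- ===== stage 7: delta from UI, running maximum, master bound =====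

lemma exists_delta (henv : IsIIDEnv P env) (hd : 0 < d) (hβ : 0 ≤ β)
    (hUI : UnifIntegrable (W P env β) 1 P) :
    ∃ δ : ℝ, 0 < δ ∧ ∀ m, δ ≤ (P {x | (4:ℝ)⁻¹ ≤ W P env β m x}).toReal := by
  obtain ⟨δ₀, hδ₀, hbound⟩ := hUI (by norm_num : (0:ℝ) < 4⁻¹)
  refine ⟨min δ₀ 1, lt_min hδ₀ one_pos, ?_⟩
  intro m
  have hAm : MeasurableSet {x | (4:ℝ)⁻¹ ≤ W P env β m x} :=
    (measurable_W P henv m) measurableSet_Ici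
  by_contra hcon
  push_neg at hcon
  have hPA : P {x | (4:ℝ)⁻¹ ≤ W P env β m x} ≤ ENNReal.ofReal δ₀ := by
    have h1 : P {x | (4:ℝ)⁻¹ ≤ W P env β m x} < ENNReal.ofReal (min δ₀ 1) :=
      (ENNReal.lt_ofReal_iff_toReal_lt (measure_ne_top P _)).mpr hcon
    exact le_trans h1.le (ENNReal.ofReal_le_ofReal (min_le_left _ _))
  have hsn := hbound m _ hAm hPA
  have hWint : Integrable (W P env β m) P := integrable_W P henv hβ m
  have hIA : ∫ x in {x | (4:ℝ)⁻¹ ≤ W P env β m x}, W P env β m x ∂P ≤ 4⁻¹ := by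
    rw [← integral_indicator hAm]
    have hnn : ∀ x, 0 ≤ Set.indicator {x | (4:ℝ)⁻¹ ≤ W P env β m x} (W P env β m) x :=
      fun x => Set.indicator_nonneg (fun x' _ => W_nonneg P m x') x
    have heq : ∫ x, Set.indicator {x | (4:ℝ)⁻¹ ≤ W P env β m x} (W P env β m) x ∂P
        = (eLpNorm (Set.indicator {x | (4:ℝ)⁻¹ ≤ W P env β m x} (W P env β m)) 1 P).toReal := by
      rw [eLpNorm_one_eq_lintegral_enorm,
        integral_eq_lintegral_of_nonneg_ae (Filter.Eventually.of_forall hnn)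
          ((measurable_W P henv m).indicator hAm).aestronglyMeasurable]
      congr 1
      apply lintegral_congr
      intro a
      rw [Real.enorm_eq_ofReal_abs, abs_of_nonneg (hnn a)]
    rw [heq]
    calc (eLpNorm _ 1 P).toReal ≤ (ENNReal.ofReal 4⁻¹).toReal :=
          ENNReal.toReal_mono ENNReal.ofReal_ne_top hsn
      _ = 4⁻¹ := by rw [ENNReal.toReal_ofReal]; norm_num
  have hIAc : ∫ x in {x | (4:ℝ)⁻¹ ≤ W P env β m x}ᶜ, W P env β m x ∂P ≤ 4⁻¹ := by
    have hb : ∀ x ∈ {x | (4:ℝ)⁻¹ ≤ W P env β m x}ᶜ, W P env β m x ≤ (4:ℝ)⁻¹ := by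
      intro x hx
      simp only [Set.mem_compl_iff, Set.mem_setOf_eq, not_le] at hx
      exact hx.le
    calc ∫ x in {x | (4:ℝ)⁻¹ ≤ W P env β m x}ᶜ, W P env β m x ∂P
        ≤ ∫ _x in {x | (4:ℝ)⁻¹ ≤ W P env β m x}ᶜ, (4:ℝ)⁻¹ ∂P := by
          apply setIntegral_mono_on hWint.integrableOn
            (integrableOn_const (measure_ne_top _ _)) hAm.compl hb
      _ ≤ 4⁻¹ := by
          rw [setIntegral_const, smul_eq_mul, measureReal_def]
          have h1 : (P {x | (4:ℝ)⁻¹ ≤ W P env β m x}ᶜ).toReal ≤ 1 := by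
            have := ENNReal.toReal_mono (by simp)
              (prob_le_one (μ := P) (s := {x | (4:ℝ)⁻¹ ≤ W P env β m x}ᶜ))
            simpa using this
          nlinarith [ENNReal.toReal_nonneg
            (a := P {x | (4:ℝ)⁻¹ ≤ W P env β m x}ᶜ)]
  have h1 : (1:ℝ) = ∫ x in {x | (4:ℝ)⁻¹ ≤ W P env β m x}, W P env β m x ∂P
      + ∫ x in {x | (4:ℝ)⁻¹ ≤ W P env β m x}ᶜ, W P env β m x ∂P := by
    rw [integral_add_compl hAm hWint, integral_W_eq_one P henv hβ hd m]
  linarith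

/-- Running maximum of `W`. -/
def MX {d : ℕ} (P : Measure Ω) (env : ℕ × (Fin d → ℤ) → Ω → ℝ) (β : ℝ) : ℕ → Ω → ℝ
  | 0 => W P env β 0
  | (n+1) => fun x => max (MX P env β n x) (W P env β (n+1) x)

lemma measurable_MX (henv : IsIIDEnv P env) (n : ℕ) : Measurable (MX P env β n) := by
  induction n with
  | zero => exact measurable_W P henv 0
  | succ n ih => exact Measurable.max ih (measurable_W P henv (n+1))

lemma MX_nonneg (n : ℕ) (x : Ω) : 0 ≤ MX P env β n x := by
  induction n with
  | zero => exact W_nonneg P 0 x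
  | succ n ih => exact le_trans ih (le_max_left _ _)

lemma MX_mono (x : Ω) : Monotone (fun n => MX P env β n x) :=
  monotone_nat_of_le_succ fun n => le_max_left _ _

lemma le_MX {n k : ℕ} (hk : k ≤ n) (x : Ω) : W P env β k x ≤ MX P env β n x := by
  induction n with
  | zero =>
    obtain rfl : k = 0 := Nat.le_zero.mp hk
    exact le_rfl
  | succ n ih =>
    by_cases hk' : k ≤ n
    · exact le_trans (ih hk') (le_max_left _ _)
    · obtain rfl : k = n + 1 := by omega
      exact le_max_right _ _

lemma MX_eq_W (n : ℕ) (x : Ω) : ∃ k, k ≤ n ∧ MX P env β n x = W P env β k x := by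
  induction n with
  | zero => exact ⟨0, le_rfl, rfl⟩
  | succ n ih =>
    obtain ⟨k, hk, hEq⟩ := ih
    rcases le_total (MX P env β n x) (W P env β (n+1) x) with h | h
    · exact ⟨n+1, le_rfl, max_eq_right h⟩
    · exact ⟨k, by omega, by rw [show MX P env β (n+1) x
        = max (MX P env β n x) (W P env β (n+1) x) from rfl, max_eq_left h, hEq]⟩

lemma lt_MX_iff {t : ℝ} {n : ℕ} {x : Ω} :
    t < MX P env β n x ↔ ∃ k, k ≤ n ∧ t < W P env β k x := by
  induction n with
  | zero =>
    constructor
    · intro h; exact ⟨0, le_rfl, h⟩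
    · rintro ⟨k, hk, h⟩
      obtain rfl : k = 0 := Nat.le_zero.mp hk
      exact h
  | succ n ih =>
    show t < max _ _ ↔ _
    rw [lt_max_iff, ih]
    constructor
    · rintro (⟨k, hk, h⟩ | h)
      · exact ⟨k, by omega, h⟩
      · exact ⟨n+1, le_rfl, h⟩
    · rintro ⟨k, hk, h⟩
      by_cases hk' : k ≤ n
      · exact Or.inl ⟨k, hk', h⟩
      · obtain rfl : k = n + 1 := by omega
        exact Or.inr h

lemma MX_union (t : ℝ) (n : ℕ) :
    {x | t < MX P env β n x} = ⋃ k ∈ Finset.range (n+1), EkSet P env β t k := by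
  classical
  ext x
  simp only [Set.mem_setOf_eq, Set.mem_iUnion, Finset.mem_range, exists_prop]
  rw [lt_MX_iff]
  constructor
  · rintro ⟨k, hk, h⟩
    have hex : ∃ k', t < W P env β k' x := ⟨k, h⟩
    refine ⟨Nat.find hex, ?_, Nat.find_spec hex, fun j hj => ?_⟩
    · have := Nat.find_min' hex h
      omega
    · exact le_of_not_gt (Nat.find_min hex hj)
  · rintro ⟨k, hk, hE⟩
    exact ⟨k, by omega, hE.1⟩

lemma EkSet_pairwise_disjoint (t : ℝ) (n : ℕ) :
    (↑(Finset.range (n+1)) : Set ℕ).PairwiseDisjoint (fun k => EkSet P env β t k) := by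
  have key : ∀ i j, i < j → Disjoint (EkSet P env β t i) (EkSet P env β t j) := by
    intro i j hij
    rw [Set.disjoint_left]
    rintro x ⟨h1, _⟩ ⟨_, h2⟩
    exact absurd h1 (not_lt.mpr (h2 i hij))
  intro i _ j _ hij
  rcases lt_or_gt_of_ne hij with h | h
  · exact key i j h
  · exact (key j i h).symm

lemma master_bound (henv : IsIIDEnv P env) (hd : 0 < d) {δ c : ℝ} (hδ : 0 < δ) (hc : 0 < c)
    (hlow : ∀ m', δ ≤ (P {x | c ≤ W P env β m' x}).toReal) (t : ℝ) (n : ℕ) :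
    P {x | t < MX P env β n x}
      ≤ ENNReal.ofReal (2/δ) * P {x | c * (δ/2) * t < W P env β n x} := by
  have hEkM : ∀ k, MeasurableSet (EkSet P env β t k) := measurableSet_EkSet P henv t
  have hGM : ∀ k m, MeasurableSet {x | δ/2 ≤ ZFun P env β c k m x} := fun k m =>
    measurableSet_le measurable_const (measurable_ZFun P henv c k m)
  rw [MX_union]
  rw [measure_biUnion_finset (EkSet_pairwise_disjoint P t n) (fun k _ => hEkM k)]
  have hk_le : ∀ k ∈ Finset.range (n+1), P (EkSet P env β t k)
      ≤ ENNReal.ofReal (2/δ)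
        * P (EkSet P env β t k ∩ {x | δ/2 ≤ ZFun P env β c k (n-k) x}) := by
    intro k _
    have hcore := core_estimate P henv hd hδ hc hlow t k (n-k)
    have hreal : (P (EkSet P env β t k)).toReal
        ≤ (2/δ) * (P (EkSet P env β t k ∩ {x | δ/2 ≤ ZFun P env β c k (n-k) x})).toReal := by
      have h2 : (P (EkSet P env β t k)).toReal
          = (2/δ) * (δ/2 * (P (EkSet P env β t k)).toReal) := by
        field_simp
      rw [h2]
      exact mul_le_mul_of_nonneg_left hcore (by positivity)
    calc P (EkSet P env β t k)
        = ENNReal.ofReal (P (EkSet P env β t k)).toReal :=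
          (ENNReal.ofReal_toReal (measure_ne_top P _)).symm
      _ ≤ ENNReal.ofReal ((2/δ)
            * (P (EkSet P env β t k ∩ {x | δ/2 ≤ ZFun P env β c k (n-k) x})).toReal) :=
          ENNReal.ofReal_le_ofReal hreal
      _ = ENNReal.ofReal (2/δ) * ENNReal.ofReal
            (P (EkSet P env β t k ∩ {x | δ/2 ≤ ZFun P env β c k (n-k) x})).toReal :=
          ENNReal.ofReal_mul (by positivity)
      _ = ENNReal.ofReal (2/δ)
            * P (EkSet P env β t k ∩ {x | δ/2 ≤ ZFun P env β c k (n-k) x}) := by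
          rw [ENNReal.ofReal_toReal (measure_ne_top P _)]
  calc (∑ k ∈ Finset.range (n+1), P (EkSet P env β t k))
      ≤ ∑ k ∈ Finset.range (n+1), ENNReal.ofReal (2/δ)
          * P (EkSet P env β t k ∩ {x | δ/2 ≤ ZFun P env β c k (n-k) x}) :=
        Finset.sum_le_sum hk_le
    _ = ENNReal.ofReal (2/δ) * ∑ k ∈ Finset.range (n+1),
          P (EkSet P env β t k ∩ {x | δ/2 ≤ ZFun P env β c k (n-k) x}) := by
        rw [Finset.mul_sum]
    _ = ENNReal.ofReal (2/δ) * P (⋃ k ∈ Finset.range (n+1),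
          EkSet P env β t k ∩ {x | δ/2 ≤ ZFun P env β c k (n-k) x}) := by
        rw [measure_biUnion_finset ?_ (fun k _ => (hEkM k).inter (hGM k (n-k)))]
        exact fun i hi j hj hij => Set.disjoint_of_subset Set.inter_subset_left
          Set.inter_subset_left (EkSet_pairwise_disjoint P t n hi hj hij)
    _ ≤ ENNReal.ofReal (2/δ) * P {x | c * (δ/2) * t < W P env β n x} := by
        apply mul_le_mul_right (measure_mono _)
        apply Set.iUnion₂_subset
        intro k hk
        have hkn : k + (n - k) = n := by
          rw [Finset.mem_range] at hk; omega
        intro x hx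
        have hsub := Ek_G_subset P henv hd hδ hc (t := t) k (n-k) hx
        simp only [Set.mem_setOf_eq] at hsub ⊢
        rwa [hkn] at hsub

lemma W_zero_eq_one (x : Ω) : W P env β 0 x = 1 := by
  unfold W
  simp


end Aux

/-- **Running maximum.** If the martingale `(W_n)` is uniformly integrable, then the running
supremum `M_∞ := sup_n W_n` has finite expectation. -/
theorem integrable_sup_of_uniformIntegrable
    {d : ℕ} (env : ℕ × (Fin d → ℤ) → Ω → ℝ) (henv : IsIIDEnv P env)
    {β : ℝ} (hβ : 0 < β)
    (hUI : UniformIntegrable (W P env β) 1 P) :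
    (∫⁻ x, ⨆ n : ℕ, ENNReal.ofReal (W P env β n x) ∂P) < ⊤ := by
  rcases Nat.eq_zero_or_pos d with hd0 | hd
  · -- degenerate dimension: `W 0 = 1` and `W n = 0` for `n ≥ 1`
    subst hd0
    have hsup : ∀ x, (⨆ n, ENNReal.ofReal (W P env β n x)) = 1 := by
      intro x
      apply le_antisymm
      · apply iSup_le
        intro n
        match n with
        | 0 => rw [W_zero_eq_one P x]; simp
        | (n+1) =>
          have hempty : IsEmpty (Fin (n+1) → Fin 0 × Bool) :=
            ⟨fun f => IsEmpty.false (f ⟨0, Nat.succ_pos n⟩)⟩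
          have hzero : W P env β (n+1) x = 0 := by
            unfold W
            haveI := hempty
            rw [Finset.univ_eq_empty, Finset.sum_empty, mul_zero]
          rw [hzero]
          simp
      · calc (1 : ENNReal) = ENNReal.ofReal (W P env β 0 x) := by rw [W_zero_eq_one P x]; simp
          _ ≤ ⨆ n, ENNReal.ofReal (W P env β n x) := le_iSup (fun n => ENNReal.ofReal (W P env β n x)) 0
    rw [lintegral_congr hsup]
    simp
  · obtain ⟨δ, hδ, hlow⟩ := exists_delta P henv hd hβ.le hUI.2.1
    obtain ⟨C, hC⟩ := hUI.2.2
    have hc : (0:ℝ) < 4⁻¹ := by norm_num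
    have ha : (0:ℝ) < 4⁻¹ * (δ/2) := by positivity
    have hMXm : ∀ n, Measurable (MX P env β n) := measurable_MX P henv
    have hWlint : ∀ n, (∫⁻ x, ENNReal.ofReal (W P env β n x) ∂P) ≤ (C : ENNReal) := by
      intro n
      calc (∫⁻ x, ENNReal.ofReal (W P env β n x) ∂P)
          = ∫⁻ x, ‖W P env β n x‖ₑ ∂P := by
            apply lintegral_congr
            intro x
            rw [Real.enorm_eq_ofReal_abs, abs_of_nonneg (W_nonneg P n x)]
        _ = eLpNorm (W P env β n) 1 P := eLpNorm_one_eq_lintegral_enorm.symm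
        _ ≤ (C : ENNReal) := hC n
    have hbound : ∀ n, (∫⁻ x, ENNReal.ofReal (MX P env β n x) ∂P)
        ≤ ENNReal.ofReal (2/δ) * (ENNReal.ofReal (4⁻¹ * (δ/2))⁻¹ * C) := by
      intro n
      rw [lintegral_eq_lintegral_meas_lt P
        (Filter.Eventually.of_forall (fun x => MX_nonneg P n x)) (hMXm n).aemeasurable]
      have hset : ∀ t : ℝ, {x | 4⁻¹ * (δ/2) * t < W P env β n x}
          = {x | t < W P env β n x / (4⁻¹ * (δ/2))} := by
        intro t
        ext x
        simp only [Set.mem_setOf_eq]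
        rw [lt_div_iff₀ ha, mul_comm t (4⁻¹ * (δ/2))]
      calc (∫⁻ t in Set.Ioi (0:ℝ), P {x | t < MX P env β n x})
          ≤ ∫⁻ t in Set.Ioi (0:ℝ),
              ENNReal.ofReal (2/δ) * P {x | t < W P env β n x / (4⁻¹ * (δ/2))} := by
            refine lintegral_mono fun t => ?_
            dsimp only
            rw [← hset t]
            exact master_bound P henv hd hδ hc hlow t n
        _ = ENNReal.ofReal (2/δ)
              * ∫⁻ t in Set.Ioi (0:ℝ), P {x | t < W P env β n x / (4⁻¹ * (δ/2))} :=
            lintegral_const_mul' _ _ ENNReal.ofReal_ne_top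
        _ = ENNReal.ofReal (2/δ)
              * ∫⁻ x, ENNReal.ofReal (W P env β n x / (4⁻¹ * (δ/2))) ∂P := by
            rw [← lintegral_eq_lintegral_meas_lt P
              (Filter.Eventually.of_forall (fun x => div_nonneg (W_nonneg P n x) ha.le))
              ((measurable_W P henv n).div_const _).aemeasurable]
        _ ≤ ENNReal.ofReal (2/δ) * (ENNReal.ofReal (4⁻¹ * (δ/2))⁻¹ * C) := by
            apply mul_le_mul_right
            have heq : ∀ x, ENNReal.ofReal (W P env β n x / (4⁻¹ * (δ/2)))
                = ENNReal.ofReal (4⁻¹ * (δ/2))⁻¹ * ENNReal.ofReal (W P env β n x) := by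
              intro x
              rw [div_eq_mul_inv, mul_comm (W P env β n x) _,
                ENNReal.ofReal_mul (inv_nonneg.mpr ha.le)]
            rw [lintegral_congr heq, lintegral_const_mul' _ _ ENNReal.ofReal_ne_top]
            exact mul_le_mul_right (hWlint n) _
    have hsup_eq : ∀ x, (⨆ n, ENNReal.ofReal (W P env β n x))
        = ⨆ n, ENNReal.ofReal (MX P env β n x) := by
      intro x
      apply le_antisymm
      · exact iSup_le fun n =>
          le_trans (ENNReal.ofReal_le_ofReal (le_MX P (le_refl n) x))
            (le_iSup (fun n => ENNReal.ofReal (MX P env β n x)) n)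
      · apply iSup_le
        intro n
        obtain ⟨k, hk, hEq⟩ := MX_eq_W P n x
        rw [hEq]
        exact le_iSup (fun n => ENNReal.ofReal (W P env β n x)) k
    calc (∫⁻ x, ⨆ n, ENNReal.ofReal (W P env β n x) ∂P)
        = ∫⁻ x, ⨆ n, ENNReal.ofReal (MX P env β n x) ∂P := lintegral_congr hsup_eq
      _ = ⨆ n, ∫⁻ x, ENNReal.ofReal (MX P env β n x) ∂P :=
          lintegral_iSup (fun n => ENNReal.measurable_ofReal.comp (hMXm n))
            (fun i j hij x => ENNReal.ofReal_le_ofReal (MX_mono P x hij))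
      _ ≤ ENNReal.ofReal (2/δ) * (ENNReal.ofReal (4⁻¹ * (δ/2))⁻¹ * C) := iSup_le hbound
      _ < ⊤ := ENNReal.mul_lt_top ENNReal.ofReal_lt_top
          (ENNReal.mul_lt_top ENNReal.ofReal_lt_top ENNReal.coe_lt_top)

end DirectedPolymer
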